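/- With φ as defined, φ(A→(B∧C)) > φ((A→B)∧(A→C)) for all formulas A, B, C. Concretely: (2(φ(B)+1)φ(C))^φ(A) > 2(φ(B)^φ(A)+1)·φ(C)^φ(A), given φ(A), φ(B), φ(C) ≥ 2. -/
import Mathlib


/-- First-order formulas: ⊤, ⊥, non-constant atoms `X t⃗` (atoms applied to
de Bruijn term-variable indices), implication, conjunction and universal
quantification (de Bruijn style: `all A` binds index 0). -/
inductive Formula : Type where
  | top : Formula
  | bot : Formula
  | atom : ℕ → List ℕ → Formula
  | arr : Formula → Formula → Formula
  | and : Formula → Formula → Formula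
  | all : Formula → Formula

/-- The measure φ on formulas. -/
def phi : Formula → ℕ
  | .top => 2
  | .bot => 2
  | .atom _ _ => 2
  | .and A B => 2 * (phi A + 1) * phi B
  | .arr A B => phi B ^ phi A
  | .all A => phi A ^ 2

/-- The measure ψ on formulas. -/
def psi : Formula → ℕ
  | .top => 2
  | .bot => 2
  | .atom _ _ => 2
  | .and A B => 2 * (psi A + 1) * psi B
  | .arr A B => psi B ^ psi A
  | .all A => 2 * psi A

lemma two_le_phi : ∀ A : Formula, 2 ≤ phi A
  | .top => le_refl _
  | .bot => le_refl _
  | .atom _ _ => le_refl _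
  | .and A B => by
      have hA := two_le_phi A
      have hB := two_le_phi B
      simp only [phi]; nlinarith
  | .arr A B => by
      have hB := two_le_phi B
      exact le_trans hB (Nat.le_self_pow (by have := two_le_phi A; omega) _)
  | .all A => by
      have hA := two_le_phi A
      simp only [phi]; nlinarith

/-- φ(A→(B∧C)) > φ((A→B)∧(A→C)) for all formulas A, B, C. -/
theorem phi_decrease_distrib :
    ∀ A B C : Formula, phi (.arr A (.and B C)) > phi (.and (.arr A B) (.arr A C)) := by
  intro A B C
  simp only [phi]
  set a := phi A with hA
  set b := phi B with hB
  set c := phi C with hC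
  have ha : 2 ≤ a := two_le_phi A
  have hb : 2 ≤ b := two_le_phi B
  have hc : 2 ≤ c := two_le_phi C
  have hcpow : 0 < c ^ a := pow_pos (by omega) a
  have h1 : b ^ a + 1 ≤ (b + 1) ^ a :=
    Nat.succ_le_of_lt (Nat.pow_lt_pow_left (by omega) (by omega))
  have h2 : 4 ≤ 2 ^ a := by
    calc 4 = 2 ^ 2 := rfl
    _ ≤ 2 ^ a := Nat.pow_le_pow_right (by omega) ha
  have key : 2 * (b ^ a + 1) < 2 ^ a * (b + 1) ^ a := by
    calc 2 * (b ^ a + 1) < 4 * (b ^ a + 1) := by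
          have : 0 < b ^ a + 1 := by omega
          omega
    _ ≤ 4 * (b + 1) ^ a := Nat.mul_le_mul_left 4 h1
    _ ≤ 2 ^ a * (b + 1) ^ a := Nat.mul_le_mul_right _ h2
  calc 2 * (b ^ a + 1) * c ^ a < 2 ^ a * (b + 1) ^ a * c ^ a :=
        Nat.mul_lt_mul_of_lt_of_le key (le_refl _) hcpow
  _ = (2 * (b + 1) * c) ^ a := by rw [mul_pow, mul_pow]
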